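/- In the forest monoid 𝓕, every element can be expressed as a product λ_{k_1}·λ_{k_2}⋯λ_{k_r} with k_1 ≤ k_2 ≤ ⋯ ≤ k_r (with r ≥ 0, the empty product being the identity), and the weakly increasing index sequence (k_1, …, k_r) representing a given element is unique. -/

import Mathlib

/-- The defining relation of the forest monoid: `λ_j * λ_i = λ_i * λ_{j+1}` for `i < j`. -/
def ForestRel : FreeMonoid ℕ+ → FreeMonoid ℕ+ → Prop := fun a b =>
  ∃ i j : ℕ+, i < j ∧ a = FreeMonoid.of j * FreeMonoid.of i ∧
    b = FreeMonoid.of i * FreeMonoid.of (j + 1)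

/-- The congruence generated by the forest relations. -/
def ForestCon : Con (FreeMonoid ℕ+) := conGen ForestRel

/-- The forest monoid `𝓕`. -/
abbrev ForestMonoid := ForestCon.Quotient

/-- The generator `λ_k` of the forest monoid. -/
def lam (k : ℕ+) : ForestMonoid := ForestCon.mk' (FreeMonoid.of k)

/-- The product `λ_{k_1} ⋯ λ_{k_r}` associated to a list of indices. -/
def lamProd (l : List ℕ+) : ForestMonoid := (l.map lam).prod

/-- Insert a generator index into a list, incrementing as it moves past smaller indices. -/
def ins (k : ℕ+) : List ℕ+ → List ℕ+
  | [] => [k]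
  | a :: t => if a < k then a :: ins (k+1) t else k :: a :: t

lemma ins_mem {m : ℕ+} : ∀ {k : ℕ+} {l : List ℕ+}, m ∈ ins k l → m ∈ l ∨ k ≤ m
  | k, [], h => by simp [ins] at h; exact Or.inr h.ge
  | k, a :: t, h => by
    rw [ins] at h
    split_ifs at h with hk
    · rcases List.mem_cons.1 h with h | h
      · exact Or.inl (h ▸ (List.mem_cons_self : a ∈ a :: t))
      · rcases ins_mem h with h | h
        · exact Or.inl (List.mem_cons_of_mem a h)
        · exact Or.inr (le_trans (le_of_lt (PNat.lt_add_one_iff.2 le_rfl)) h)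
    · rcases List.mem_cons.1 h with h | h
      · exact Or.inr h.ge
      · exact Or.inl h

lemma ins_sorted : ∀ {k : ℕ+} {l : List ℕ+}, l.Pairwise (· ≤ ·) → (ins k l).Pairwise (· ≤ ·)
  | k, [], _ => by simp [ins]
  | k, a :: t, h => by
    rw [ins]
    rcases List.pairwise_cons.1 h with ⟨ha, ht⟩
    split_ifs with hk
    · refine List.pairwise_cons.2 ⟨?_, ins_sorted ht⟩
      intro m hm
      rcases ins_mem hm with h | h
      · exact ha m h
      · exact le_trans hk.le (le_trans (le_of_lt (PNat.lt_add_one_iff.2 le_rfl)) h)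
    · exact List.pairwise_cons.2 ⟨fun m hm => by
        rcases List.mem_cons.1 hm with rfl | hm
        · exact le_of_not_gt hk
        · exact le_trans (le_of_not_gt hk) (ha m hm), h⟩

lemma ins_swap : ∀ {i j : ℕ+} (_ : i < j) (l : List ℕ+),
    ins j (ins i l) = ins i (ins (j+1) l)
  | i, j, hij, [] => by
    simp only [ins, if_pos hij, if_neg (not_lt.2 (le_of_lt (hij.trans (PNat.lt_add_one_iff.2 le_rfl))))]
  | i, j, hij, a :: t => by
    by_cases hai : a < i
    · have haj : a < j := hai.trans hij
      have haj1 : a < j + 1 := haj.trans (PNat.lt_add_one_iff.2 le_rfl)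
      rw [ins, if_pos hai, ins, if_pos haj, ins, if_pos haj1, ins, if_pos hai,
        ins_swap (by exact (add_lt_add_iff_right 1).2 hij) t]
    · have hia : i ≤ a := le_of_not_gt hai
      have hij1 : i < j + 1 := hij.trans (PNat.lt_add_one_iff.2 le_rfl)
      by_cases haj : a < j + 1
      · simp only [ins, if_neg hai, if_pos hij, if_pos haj]
      · simp only [ins, if_neg hai, if_pos hij, if_neg haj, if_neg (not_lt.2 hij1.le)]

/-- Sorted lists are fixed by repeated insertion. -/
lemma ins_of_le_head {k a : ℕ+} {t : List ℕ+} (h : k ≤ a) : ins k (a :: t) = k :: a :: t := by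
  rw [ins, if_neg (not_lt.2 h)]

/-- The insertion action, as a monoid hom into functions on lists. -/
def insHom : FreeMonoid ℕ+ →* Function.End (List ℕ+) :=
  FreeMonoid.lift (fun k l => ins k l)

lemma forestCon_le_ker : ForestCon ≤ Con.ker insHom := by
  rw [ForestCon]
  refine Con.conGen_le.2 ?_
  rintro a b ⟨i, j, hij, rfl, rfl⟩
  show insHom _ = insHom _
  simp only [map_mul, FreeMonoid.lift_eval_of, insHom]
  funext l
  exact ins_swap hij l

lemma lam_rel {i j : ℕ+} (hij : i < j) : lam j * lam i = lam i * lam (j+1) := by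
  have : ForestCon (FreeMonoid.of j * FreeMonoid.of i)
      (FreeMonoid.of i * FreeMonoid.of (j+1)) :=
    ConGen.Rel.of _ _ ⟨i, j, hij, rfl, rfl⟩
  simpa [lam, map_mul] using (ForestCon.eq.2 this)

lemma lamProd_cons (a : ℕ+) (t : List ℕ+) : lamProd (a :: t) = lam a * lamProd t := by
  simp [lamProd]

lemma lamProd_ins : ∀ (k : ℕ+) (l : List ℕ+), lamProd (ins k l) = lam k * lamProd l
  | k, [] => by simp [ins, lamProd]
  | k, a :: t => by
    rw [ins]
    split_ifs with hk
    · rw [lamProd_cons, lamProd_ins (k+1) t, lamProd_cons, ← mul_assoc, ← mul_assoc,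
        lam_rel hk]
    · rw [lamProd_cons]

lemma lamProd_eq_mk (l : List ℕ+) : lamProd l = ForestCon.mk' (FreeMonoid.ofList l) := by
  induction l with
  | nil => simp [lamProd]
  | cons a t ih =>
      rw [lamProd_cons, ih]
      have : FreeMonoid.ofList (a :: t) = FreeMonoid.of a * FreeMonoid.ofList t := rfl
      rw [this, map_mul]
      rfl

lemma lamProd_insHom (w : FreeMonoid ℕ+) (l : List ℕ+) :
    lamProd (insHom w l) = ForestCon.mk' w * lamProd l := by
  induction w using FreeMonoid.recOn with
  | one => simp [insHom]; rfl
  | of_mul a t ih =>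
      rw [map_mul, map_mul]
      show lamProd (insHom (FreeMonoid.of a) (insHom t l)) = _
      show lamProd (ins a (insHom t l)) = _
      rw [lamProd_ins, ih, ← mul_assoc]
      rfl

lemma insHom_sorted : ∀ {l : List ℕ+}, l.Pairwise (· ≤ ·) → insHom (FreeMonoid.ofList l) [] = l
  | [], _ => rfl
  | a :: t, h => by
    rcases List.pairwise_cons.1 h with ⟨ha, ht⟩
    have : FreeMonoid.ofList (a :: t) = FreeMonoid.of a * FreeMonoid.ofList t := rfl
    rw [this, map_mul]
    show insHom (FreeMonoid.of a) (insHom (FreeMonoid.ofList t) []) = _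
    rw [insHom_sorted ht]
    show ins a t = a :: t
    cases t with
    | nil => rfl
    | cons b s => exact ins_of_le_head (ha b (List.mem_cons_self : b ∈ b :: s))

lemma ins_sorted_nil (w : FreeMonoid ℕ+) : (insHom w []).Pairwise (· ≤ ·) := by
  induction w using FreeMonoid.recOn with
  | one => exact List.Pairwise.nil
  | of_mul a t ih =>
      rw [map_mul]
      show (insHom (FreeMonoid.of a) (insHom t [])).Pairwise (· ≤ ·)
      show (ins a (insHom t [])).Pairwise (· ≤ ·)
      exact ins_sorted ih

/-- every element of the forest monoid is represented by a unique weakly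
increasing sequence of indices. -/
theorem forestMonoid_normal_form (x : ForestMonoid) :
    ∃! l : List ℕ+, List.Pairwise (· ≤ ·) l ∧ lamProd l = x := by
  obtain ⟨w, rfl⟩ := ForestCon.mk'_surjective x
  refine ⟨insHom w [], ⟨ins_sorted_nil w, by simpa [lamProd] using lamProd_insHom w []⟩, ?_⟩
  rintro l ⟨hs, hl⟩
  rw [lamProd_eq_mk] at hl
  have hcon : ForestCon (FreeMonoid.ofList l) w := ForestCon.eq.1 hl
  have hins : insHom (FreeMonoid.ofList l) = insHom w := forestCon_le_ker hcon
  rw [← insHom_sorted hs, hins]
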